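/- arXiv:1306.5168 — 3 statements merged into one kernel-verified Lean document; each statement's English description precedes it below -/
import Mathlib

section
/- Let 0 < r₀ < r and let U : ℝ → ℝ be twice continuously differentiable on [r₀², r²]. Set σ(x) = x U''(x) + U'(x), t₀ = r² U'(r²), and u₀ = r₀² log(r₀²) U'(r₀²) − U(r₀²). Then 2 [ ∫_{r₀²}^{r²} ( x U'(x) log x − U(x) ) σ(x) dx − ( t₀ − r₀² U'(r₀²) ) u₀ ] = ∫_{r₀²}^{r²} x (U'(x))² dx + t₀² log(r²) − 2 t₀ U(r²) − 2 u₀ t₀ + r₀⁴ (U'(r₀²))² log(r₀²). -/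
/-- Equivalence of the two integral formulas for (twice) the restricted
tau-function `F(t₀)` of a radially symmetric background:
`2[∫_{r₀²}^{r²} (x U'(x) log x − U(x)) σ(x) dx − (t₀ − r₀² U'(r₀²)) u₀]
 = ∫_{r₀²}^{r²} x (U'(x))² dx + t₀² log(r²) − 2 t₀ U(r²) − 2 u₀ t₀
   + r₀⁴ (U'(r₀²))² log(r₀²)`. -/
theorem tau_two_formulas_equivalent (r₀ r : ℝ) (h₀ : 0 < r₀) (hr : r₀ < r)
    (U : ℝ → ℝ) (I : Set ℝ) (hI : I = Set.Icc (r₀ ^ 2) (r ^ 2))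
    (hU : ContDiffOn ℝ 2 U I)
    (σ : ℝ → ℝ)
    (hσ : ∀ x ∈ I, σ x = x * derivWithin (derivWithin U I) I x + derivWithin U I x)
    (t₀ u₀ : ℝ)
    (ht₀ : t₀ = r ^ 2 * derivWithin U I (r ^ 2))
    (hu₀ : u₀ = r₀ ^ 2 * Real.log (r₀ ^ 2) * derivWithin U I (r₀ ^ 2) - U (r₀ ^ 2)) :
    2 * ((∫ x in (r₀ ^ 2)..(r ^ 2), (x * derivWithin U I x * Real.log x - U x) * σ x) -
        (t₀ - r₀ ^ 2 * derivWithin U I (r₀ ^ 2)) * u₀) =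
      (∫ x in (r₀ ^ 2)..(r ^ 2), x * (derivWithin U I x) ^ 2) +
        t₀ ^ 2 * Real.log (r ^ 2) - 2 * t₀ * U (r ^ 2) - 2 * u₀ * t₀ +
        r₀ ^ 4 * (derivWithin U I (r₀ ^ 2)) ^ 2 * Real.log (r₀ ^ 2) := by
  subst hI ht₀ hu₀
  have ha : (0:ℝ) < r₀ ^ 2 := by positivity
  have hab : r₀ ^ 2 < r ^ 2 := by nlinarith
  set a := r₀ ^ 2 with ha_def
  set b := r ^ 2 with hb_def
  set I : Set ℝ := Set.Icc a b with hI_def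
  have hIuniq : UniqueDiffOn ℝ I := uniqueDiffOn_Icc hab
  set f := derivWithin U I with hf_def
  set f2 := derivWithin f I with hf2_def
  have hUd : DifferentiableOn ℝ U I := hU.differentiableOn (by norm_num)
  have hfC : ContDiffOn ℝ 1 f I := hU.derivWithin hIuniq le_rfl
  have hfd : DifferentiableOn ℝ f I := hfC.differentiableOn (by norm_num)
  have hf2c : ContinuousOn f2 I := ((hfC.derivWithin (m := 0) hIuniq (by norm_num)).continuousOn : ContinuousOn (derivWithin f I) I)
  have hfc : ContinuousOn f I := hfC.continuousOn
  have hUc : ContinuousOn U I := hU.continuousOn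
  have hpos : ∀ x ∈ I, (0:ℝ) < x := fun x hx => lt_of_lt_of_le ha hx.1
  have hlogc : ContinuousOn Real.log I :=
    Real.continuousOn_log.mono (fun x hx => (hpos x hx).ne')
  -- derivative facts at interior points
  have hUx : ∀ x ∈ Set.Ioo a b, HasDerivAt U (f x) x := fun x hx =>
    ((hUd x (Set.Ioo_subset_Icc_self hx)).hasDerivWithinAt).hasDerivAt
      (Icc_mem_nhds hx.1 hx.2)
  have hfx : ∀ x ∈ Set.Ioo a b, HasDerivAt f (f2 x) x := fun x hx =>
    ((hfd x (Set.Ioo_subset_Icc_self hx)).hasDerivWithinAt).hasDerivAt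
      (Icc_mem_nhds hx.1 hx.2)
  set F : ℝ → ℝ := fun x => (x * f x) * (x * f x) * Real.log x - 2 * U x * (x * f x)
    with hF_def
  set G : ℝ → ℝ := fun x =>
      2 * ((x * f x * Real.log x - U x) * (x * f2 x + f x)) - x * (f x) ^ 2 with hG_def
  have hFderiv : ∀ x ∈ Set.Ioo a b, HasDerivWithinAt F (G x) (Set.Ioi x) x := by
    intro x hx
    have hx0 : x ≠ 0 := (lt_of_lt_of_le ha hx.1.le).ne'
    have h1 : HasDerivAt (fun y => y * f y) (1 * f x + x * f2 x) x :=
      (hasDerivAt_id x).mul (hfx x hx)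
    have h2 : HasDerivAt (fun y => (y * f y) * (y * f y))
        ((1 * f x + x * f2 x) * (x * f x) + (x * f x) * (1 * f x + x * f2 x)) x :=
      h1.mul h1
    have hlog : HasDerivAt Real.log x⁻¹ x := Real.hasDerivAt_log hx0
    have h3 := h2.mul hlog
    have h4 := (((hasDerivAt_const x (2:ℝ)).mul (hUx x hx)).mul h1)
    have h5 := h3.sub h4
    have : HasDerivAt F (G x) x := by
      convert h5 using 1
      · rfl
      · rfl
      · rfl
      rw [hG_def]
      simp only [Pi.mul_apply]
      field_simp
      ring
    exact this.hasDerivWithinAt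
  have hFcont : ContinuousOn F I := by
    apply ContinuousOn.sub
    · exact ((continuousOn_id.mul hfc).mul (continuousOn_id.mul hfc)).mul hlogc
    · exact ((continuousOn_const.mul hUc).mul (continuousOn_id.mul hfc))
  have hGcont : ContinuousOn G I := by
    apply ContinuousOn.sub
    · exact continuousOn_const.mul
        (((continuousOn_id.mul hfc).mul hlogc |>.sub hUc).mul
          ((continuousOn_id.mul hf2c).add hfc))
    · exact continuousOn_id.mul (hfc.pow 2)
  have hGint : IntervalIntegrable G MeasureTheory.volume a b := by
    apply ContinuousOn.intervalIntegrable
    rwa [Set.uIcc_of_le hab.le]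
  have key : (∫ x in a..b, G x) = F b - F a :=
    intervalIntegral.integral_eq_sub_of_hasDeriv_right_of_le hab.le hFcont hFderiv hGint
  -- split the integral
  have hint1 : IntervalIntegrable (fun x => (x * f x * Real.log x - U x) * (x * f2 x + f x))
      MeasureTheory.volume a b := by
    apply ContinuousOn.intervalIntegrable
    rw [Set.uIcc_of_le hab.le]
    exact ((continuousOn_id.mul hfc).mul hlogc |>.sub hUc).mul
      ((continuousOn_id.mul hf2c).add hfc)
  have hint2 : IntervalIntegrable (fun x => x * (f x) ^ 2) MeasureTheory.volume a b := by
    apply ContinuousOn.intervalIntegrable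
    rw [Set.uIcc_of_le hab.le]
    exact continuousOn_id.mul (hfc.pow 2)
  have hsplit : (∫ x in a..b, G x)
      = 2 * (∫ x in a..b, (x * f x * Real.log x - U x) * (x * f2 x + f x))
        - ∫ x in a..b, x * (f x) ^ 2 := by
    rw [hG_def]
    rw [intervalIntegral.integral_sub (hint1.const_mul 2) hint2,
      intervalIntegral.integral_const_mul]
  have hcongr : (∫ x in a..b, (x * f x * Real.log x - U x) * σ x)
      = ∫ x in a..b, (x * f x * Real.log x - U x) * (x * f2 x + f x) := by
    apply intervalIntegral.integral_congr
    intro x hx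
    rw [Set.uIcc_of_le hab.le] at hx
    simp only [hσ x hx]
  rw [hcongr]
  have h2 : 2 * (∫ x in a..b, (x * f x * Real.log x - U x) * (x * f2 x + f x))
      = F b - F a + ∫ x in a..b, x * (f x) ^ 2 := by
    rw [← key, hsplit]; ring
  have hr4 : r₀ ^ 4 = a ^ 2 := by rw [ha_def]; ring
  rw [hr4]
  simp only [hF_def] at h2
  linear_combination h2
end

section
/- Let N ≥ 2 and let τ₂, …, τ_N be real parameters. Suppose u : Ω → ℝ is a differentiable function on an open set Ω ⊂ ℝ × ℝ^{N−1} of points (t₀, τ₂, …, τ_N) satisfying the implicit equation t₀ = Σ_{k=2}^{N} k τ_k u(t₀, τ)^{k−1} on Ω, and suppose Σ_{k=2}^{N} k(k−1) τ_k u^{k−2} ≠ 0 on Ω. Then u satisfies the dispersionless KdV hierarchy: for every j with 2 ≤ j ≤ N, ∂u/∂τ_j + j u^{j−1} ∂u/∂t₀ = 0 on Ω. -/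
/-- If `u(t₀, τ₂, …, τ_N)` is differentiable on an open set `Ω` and
satisfies the implicit equation `t₀ = Σ_{k=2}^N k τ_k u^{k−1}` with nondegeneracy
`Σ_{k=2}^N k(k−1) τ_k u^{k−2} ≠ 0`, then `u` solves the dispersionless KdV hierarchy:
`∂u/∂τ_j + j u^{j−1} ∂u/∂t₀ = 0` for `2 ≤ j ≤ N`.
Here a point of `ℝ × (Fin (N−1) → ℝ)` is `(t₀, τ)` with `τ i = τ_{i+2}`. -/
theorem dispersionless_KdV_hierarchy (N : ℕ) (hN : 2 ≤ N)
    (Ω : Set (ℝ × (Fin (N - 1) → ℝ))) (hΩ : IsOpen Ω)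
    (u : ℝ × (Fin (N - 1) → ℝ) → ℝ) (hu : DifferentiableOn ℝ u Ω)
    (himp : ∀ p ∈ Ω,
      p.1 = ∑ i : Fin (N - 1), ((i : ℕ) + 2 : ℝ) * p.2 i * u p ^ ((i : ℕ) + 1))
    (hnd : ∀ p ∈ Ω,
      (∑ i : Fin (N - 1), ((i : ℕ) + 2 : ℝ) * ((i : ℕ) + 1 : ℝ) * p.2 i * u p ^ (i : ℕ)) ≠ 0) :
    ∀ p ∈ Ω, ∀ i : Fin (N - 1),
      fderiv ℝ u p (0, Pi.single i 1) +
        ((i : ℕ) + 2 : ℝ) * u p ^ ((i : ℕ) + 1) * fderiv ℝ u p (1, 0) = 0 := by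
  intro p hp j
  have hmem : Ω ∈ nhds p := hΩ.mem_nhds hp
  have hpd : DifferentiableAt ℝ u p := (hu p hp).differentiableAt hmem
  set d := fderiv ℝ u p with hd
  have hud : HasFDerivAt u d p := hpd.hasFDerivAt
  set proj : Fin (N-1) → (ℝ × (Fin (N-1) → ℝ)) →L[ℝ] ℝ :=
    fun i => (ContinuousLinearMap.proj i).comp (ContinuousLinearMap.snd ℝ ℝ (Fin (N-1) → ℝ))
    with hproj
  have hterm : ∀ i : Fin (N-1),
      HasFDerivAt (fun q : ℝ × (Fin (N-1) → ℝ) =>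
          ((i:ℕ)+2 : ℝ) * q.2 i * u q ^ ((i:ℕ)+1))
        ((((i:ℕ)+2 : ℝ) * p.2 i) • (((((i:ℕ)+1 : ℕ) : ℝ) * u p ^ ((i:ℕ)+1-1)) • d)
          + (u p ^ ((i:ℕ)+1)) • (((i:ℕ)+2 : ℝ) • proj i)) p := by
    intro i
    have h1 : HasFDerivAt (fun q : ℝ × (Fin (N-1) → ℝ) => ((i:ℕ)+2 : ℝ) * q.2 i)
        (((i:ℕ)+2 : ℝ) • proj i) p := by
      have : HasFDerivAt (fun q : ℝ × (Fin (N-1) → ℝ) => q.2 i) (proj i) p :=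
        (proj i).hasFDerivAt
      exact this.const_mul _
    have h2 : HasFDerivAt (fun q => u q ^ ((i:ℕ)+1))
        (((((i:ℕ)+1 : ℕ) : ℝ) * u p ^ ((i:ℕ)+1-1)) • d) p :=
      (hasDerivAt_pow ((i:ℕ)+1) (u p)).comp_hasFDerivAt p hud
    exact h1.mul h2
  set G := (∑ i : Fin (N-1), ((((i:ℕ)+2 : ℝ) * p.2 i) • (((((i:ℕ)+1 : ℕ) : ℝ) * u p ^ ((i:ℕ)+1-1)) • d)
          + (u p ^ ((i:ℕ)+1)) • (((i:ℕ)+2 : ℝ) • proj i))) with hG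
  have hg : HasFDerivAt (fun q : ℝ × (Fin (N-1) → ℝ) =>
      ∑ i : Fin (N-1), ((i:ℕ)+2 : ℝ) * q.2 i * u q ^ ((i:ℕ)+1)) G p :=
    HasFDerivAt.fun_sum (fun i _ => hterm i)
  have heq : (fun q : ℝ × (Fin (N-1) → ℝ) => q.1) =ᶠ[nhds p]
      (fun q => ∑ i : Fin (N-1), ((i:ℕ)+2 : ℝ) * q.2 i * u q ^ ((i:ℕ)+1)) :=
    Filter.eventuallyEq_of_mem hmem himp
  have hfst : fderiv ℝ (fun q : ℝ × (Fin (N-1) → ℝ) => q.1) p = G := by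
    rw [heq.fderiv_eq, hg.fderiv]
  have hFST : (ContinuousLinearMap.fst ℝ ℝ (Fin (N-1) → ℝ)) = G := by
    rw [← hfst, fderiv_fst]
  set S := (∑ i : Fin (N - 1), ((i : ℕ) + 2 : ℝ) * ((i : ℕ) + 1 : ℝ) * p.2 i * u p ^ (i : ℕ))
    with hS
  have hSne := hnd p hp
  have key : ∀ v : ℝ × (Fin (N-1) → ℝ), v.1 =
      S * d v + ∑ i : Fin (N-1), (u p ^ ((i:ℕ)+1)) * (((i:ℕ)+2 : ℝ) * v.2 i) := by
    intro v
    have h := congrArg (fun L : (ℝ × (Fin (N-1) → ℝ)) →L[ℝ] ℝ => L v) hFST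
    simp only [hG, hproj] at h
    simp at h
    rw [hS, Finset.sum_mul, ← Finset.sum_add_distrib, h]
    apply Finset.sum_congr rfl
    intro i _
    push_cast [Nat.add_sub_cancel]
    ring
  have e1 : (1:ℝ) = S * d (1, (0 : Fin (N-1) → ℝ)) := by
    have := key (1, 0)
    simpa using this
  have e2 : (0:ℝ) = S * d (0, Pi.single j (1:ℝ)) + (u p ^ ((j:ℕ)+1)) * ((j:ℕ)+2 : ℝ) := by
    have := key (0, Pi.single j 1)
    simpa [Pi.single_apply, Finset.sum_ite_eq', mul_comm] using this
  have hd1 : d (1, (0 : Fin (N-1) → ℝ)) = 1 / S := by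
    field_simp [show S ≠ 0 from hSne]
    linarith
  have hd2 : d (0, Pi.single j (1:ℝ)) = -((u p ^ ((j:ℕ)+1)) * ((j:ℕ)+2 : ℝ)) / S := by
    field_simp [show S ≠ 0 from hSne]
    linarith
  rw [hd1, hd2]
  field_simp [show S ≠ 0 from hSne]
  ring
end

section
/- Let k > 2 be an integer, C₁ > 0, 0 < r₀ < r, and set R_k = (k−1) C₁^{k−1}, a_k = (1/k) (k−2)^{k−2} / (k−1)^{k−1}, and U_k(x) = ( R_k/(k−1) )^{1/(k−2)} ( log(x/r₀²) )^{(k−1)/(k−2)} for x ≥ r₀². Then U_k(r₀²) = 0, U_k'(x) → 0 as x → r₀²⁺ (so u₀ = 0), and with σ(x) = x U_k''(x) + U_k'(x) and t₀ = r² U_k'(r²), one has ∫_{r₀²}^{r²} ( x U_k'(x) log x − U_k(x) ) σ(x) dx = ( (k−1) a_k / R_k ) t₀^k + (t₀²/2) log(r₀²). Moreover the second derivative of the right-hand side in t₀ equals log(r²). -/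
open Set Filter MeasureTheory intervalIntegral

set_option maxHeartbeats 1000000


/-- For the general family `U_k(x) = (R_k/(k−1))^{1/(k−2)}
(log(x/r₀²))^{(k−1)/(k−2)}` with `R_k = (k−1) C₁^{k−1}`,
`a_k = (1/k)(k−2)^{k−2}/(k−1)^{k−1}`: `U_k(r₀²) = 0`, `U_k'(x) → 0` as `x → r₀²⁺`
(so `u₀ = 0`), and with `σ(x) = x U_k''(x) + U_k'(x)`, `t₀ = r² U_k'(r²)`,
`∫_{r₀²}^{r²} (x U_k'(x) log x − U_k(x)) σ(x) dx = ((k−1) a_k/R_k) t₀^k +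
(t₀²/2) log(r₀²)`; moreover the second derivative of the right-hand side in `t₀`
equals `log(r²)`. -/
theorem tau_general_family (k : ℕ) (hk : 2 < k) (C₁ r₀ r : ℝ) (hC₁ : 0 < C₁)
    (h₀ : 0 < r₀) (hr : r₀ < r) (Rk ak : ℝ)
    (hRk : Rk = ((k : ℝ) - 1) * C₁ ^ (k - 1))
    (hak : ak = 1 / (k : ℝ) * ((k : ℝ) - 2) ^ (k - 2) / ((k : ℝ) - 1) ^ (k - 1))
    (U : ℝ → ℝ)
    (hU : ∀ x : ℝ, r₀ ^ 2 ≤ x →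
      U x = (Rk / ((k : ℝ) - 1)) ^ (1 / ((k : ℝ) - 2)) *
        Real.log (x / r₀ ^ 2) ^ (((k : ℝ) - 1) / ((k : ℝ) - 2)))
    (t₀ : ℝ) (ht₀ : t₀ = r ^ 2 * deriv U (r ^ 2)) :
    U (r₀ ^ 2) = 0 ∧
    Filter.Tendsto (deriv U) (nhdsWithin (r₀ ^ 2) (Set.Ioi (r₀ ^ 2))) (nhds 0) ∧
    (∫ x in (r₀ ^ 2)..(r ^ 2),
        (x * deriv U x * Real.log x - U x) * (x * deriv (deriv U) x + deriv U x)) =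
      ((k : ℝ) - 1) * ak / Rk * t₀ ^ k + t₀ ^ 2 / 2 * Real.log (r₀ ^ 2) ∧
    deriv (deriv (fun t : ℝ =>
        ((k : ℝ) - 1) * ak / Rk * t ^ k + t ^ 2 / 2 * Real.log (r₀ ^ 2))) t₀ =
      Real.log (r ^ 2) := by
  have hr0sq : (0:ℝ) < r₀ ^ 2 := by positivity
  have hrsq : r₀ ^ 2 < r ^ 2 := by nlinarith
  have hk2 : (2:ℝ) < (k:ℝ) := by exact_mod_cast hk
  have hK2 : (0:ℝ) < (k:ℝ) - 2 := by linarith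
  have hK1 : (0:ℝ) < (k:ℝ) - 1 := by linarith
  have hK0 : (0:ℝ) < (k:ℝ) := by linarith
  have hck2 : ((k - 2 : ℕ) : ℝ) = (k:ℝ) - 2 := by
    rw [Nat.cast_sub (by omega : 2 ≤ k)]; norm_num
  have hck1 : ((k - 1 : ℕ) : ℝ) = (k:ℝ) - 1 := by
    rw [Nat.cast_sub (by omega : 1 ≤ k)]; norm_num
  set c : ℝ := Real.log (r₀ ^ 2) with hc_def
  set cst : ℝ := ((k:ℝ) - 1) * ak / Rk with hcst_def
  set p : ℝ := ((k:ℝ) - 1) / ((k:ℝ) - 2) with hp_def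
  set A : ℝ := (Rk / ((k:ℝ) - 1)) ^ (1 / ((k:ℝ) - 2)) with hA_def
  have hX : (0:ℝ) < C₁ ^ (k - 1) := pow_pos hC₁ _
  have hRA : Rk / ((k:ℝ) - 1) = C₁ ^ (k - 1) := by
    rw [hRk]; field_simp
  have hApos : 0 < A := by rw [hA_def, hRA]; positivity
  have hppos : 0 < p := div_pos hK1 hK2
  have hpm1' : p - 1 = 1 / ((k:ℝ) - 2) := by
    rw [hp_def]; field_simp; norm_num
  have hpm1 : 0 < p - 1 := by rw [hpm1']; positivity
  have hp1 : 1 < p := by linarith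
  have h2p1 : (0:ℝ) < 2 * p - 1 := by linarith
  have h2p2 : (0:ℝ) < 2 * p - 2 := by linarith
  -- log facts
  have hLpos : ∀ x : ℝ, r₀ ^ 2 < x → 0 < Real.log (x / r₀ ^ 2) := by
    intro x hx
    exact Real.log_pos ((one_lt_div hr0sq).2 hx)
  have hL0 : Real.log (r₀ ^ 2 / r₀ ^ 2) = 0 := by
    rw [div_self hr0sq.ne', Real.log_one]
  have hL' : ∀ x : ℝ, 0 < x → HasDerivAt (fun y => Real.log (y / r₀ ^ 2)) x⁻¹ x := by
    intro x hx
    have h1 : HasDerivAt (fun y => Real.log y - c) x⁻¹ x :=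
      (Real.hasDerivAt_log hx.ne').sub_const _
    apply h1.congr_of_eventuallyEq
    filter_upwards [eventually_gt_nhds hx] with y hy
    rw [Real.log_div (ne_of_gt hy) hr0sq.ne', hc_def]
  have hLcont : ∀ x : ℝ, 0 < x → ContinuousAt (fun y => Real.log (y / r₀ ^ 2)) x := by
    intro x hx
    exact (Real.continuousAt_log (by positivity)).comp ((continuousAt_id).div_const _)
  -- first derivative of U
  have hU' : ∀ x : ℝ, r₀ ^ 2 < x →
      HasDerivAt U (A * (x⁻¹ * p * Real.log (x / r₀ ^ 2) ^ (p - 1))) x := by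
    intro x hx
    have hx0 : 0 < x := hr0sq.trans hx
    have h1 := ((hL' x hx0).rpow_const (p := p) (Or.inl (hLpos x hx).ne')).const_mul A
    apply h1.congr_of_eventuallyEq
    filter_upwards [eventually_gt_nhds hx] with y hy
    exact hU y hy.le
  have hdU : ∀ x : ℝ, r₀ ^ 2 < x →
      deriv U x = A * (x⁻¹ * p * Real.log (x / r₀ ^ 2) ^ (p - 1)) := fun x hx =>
    (hU' x hx).deriv
  -- Part 1
  have part1 : U (r₀ ^ 2) = 0 := by
    rw [hU _ le_rfl, hL0, Real.zero_rpow (by positivity : p ≠ 0), mul_zero]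
  -- Part 2
  have part2 : Filter.Tendsto (deriv U) (nhdsWithin (r₀ ^ 2) (Set.Ioi (r₀ ^ 2))) (nhds 0) := by
    have hca : ContinuousAt (fun x : ℝ => A * (x⁻¹ * p * Real.log (x / r₀ ^ 2) ^ (p - 1)))
        (r₀ ^ 2) := by
      have h1 : ContinuousAt (fun x : ℝ => Real.log (x / r₀ ^ 2) ^ (p - 1)) (r₀ ^ 2) := by
        have hrc : ContinuousAt (fun y : ℝ => y ^ (p - 1)) (Real.log (r₀ ^ 2 / r₀ ^ 2)) :=
          Real.continuousAt_rpow_const _ _ (Or.inr hpm1.le)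
        exact ContinuousAt.comp (x := r₀ ^ 2) hrc (hLcont _ hr0sq)
      exact continuousAt_const.mul (((continuousAt_inv₀ hr0sq.ne').mul continuousAt_const).mul h1)
    have hT' : Filter.Tendsto (fun x : ℝ => A * (x⁻¹ * p * Real.log (x / r₀ ^ 2) ^ (p - 1)))
        (nhdsWithin (r₀ ^ 2) (Set.Ioi (r₀ ^ 2))) (nhds 0) := by
      have h0 : Filter.Tendsto (fun x : ℝ => A * (x⁻¹ * p * Real.log (x / r₀ ^ 2) ^ (p - 1)))
          (nhdsWithin (r₀ ^ 2) (Set.Ioi (r₀ ^ 2)))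
          (nhds (A * ((r₀ ^ 2)⁻¹ * p * Real.log (r₀ ^ 2 / r₀ ^ 2) ^ (p - 1)))) :=
        hca.continuousWithinAt
      simpa [hL0, Real.zero_rpow hpm1.ne'] using h0
    refine Filter.Tendsto.congr' ?_ hT'
    filter_upwards [self_mem_nhdsWithin] with y hy
    exact (hdU y hy).symm
  -- second derivative of U
  have hd1' : ∀ x : ℝ, r₀ ^ 2 < x →
      HasDerivAt (fun x : ℝ => A * (x⁻¹ * p * Real.log (x / r₀ ^ 2) ^ (p - 1)))
        (A * ((-(x ^ 2)⁻¹ * p) * Real.log (x / r₀ ^ 2) ^ (p - 1)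
          + (x⁻¹ * p) * (x⁻¹ * (p - 1) * Real.log (x / r₀ ^ 2) ^ (p - 1 - 1)))) x := by
    intro x hx
    have hx0 : 0 < x := hr0sq.trans hx
    have hLne : Real.log (x / r₀ ^ 2) ≠ 0 := (hLpos x hx).ne'
    have hg : HasDerivAt (fun y : ℝ => y⁻¹ * p) (-(x ^ 2)⁻¹ * p) x :=
      (hasDerivAt_inv hx0.ne').mul_const p
    have hh := (hL' x hx0).rpow_const (p := p - 1) (Or.inl hLne)
    exact (hg.mul hh).const_mul A
  have hddU : ∀ x : ℝ, r₀ ^ 2 < x → deriv (deriv U) x =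
      A * ((-(x ^ 2)⁻¹ * p) * Real.log (x / r₀ ^ 2) ^ (p - 1)
        + (x⁻¹ * p) * (x⁻¹ * (p - 1) * Real.log (x / r₀ ^ 2) ^ (p - 1 - 1))) := by
    intro x hx
    have heq : deriv U =ᶠ[nhds x]
        fun x : ℝ => A * (x⁻¹ * p * Real.log (x / r₀ ^ 2) ^ (p - 1)) := by
      filter_upwards [eventually_gt_nhds hx] with y hy
      exact hdU y hy
    rw [heq.deriv_eq, (hd1' x hx).deriv]
  set cA : ℝ := A ^ 2 * p * (p - 1) with hcA_def
  -- integrand equals explicit function on the open interval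
  have hφ : ∀ x : ℝ, r₀ ^ 2 < x →
      (x * deriv U x * Real.log x - U x) * (x * deriv (deriv U) x + deriv U x) =
      cA * (p - 1) * (Real.log (x / r₀ ^ 2) ^ (2 * p - 2) * x⁻¹)
        + cA * p * c * (Real.log (x / r₀ ^ 2) ^ (2 * p - 3) * x⁻¹) := by
    intro x hx
    have hx0 : 0 < x := hr0sq.trans hx
    have hw : 0 < Real.log (x / r₀ ^ 2) := hLpos x hx
    have hlogx : Real.log x = Real.log (x / r₀ ^ 2) + c := by
      rw [hc_def, Real.log_div hx0.ne' hr0sq.ne']; ring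
    rw [hdU x hx, hddU x hx, hU x hx.le, hlogx]
    rw [show p - 1 - 1 = p - 2 by ring]
    set w := Real.log (x / r₀ ^ 2) with hw_def
    have key : ∀ a b : ℝ, a + 1 = b → w ^ a * w = w ^ b := by
      intro a b hab
      rw [← hab, Real.rpow_add hw, Real.rpow_one]
    have key2 : ∀ a b s : ℝ, a + b = s → w ^ a * w ^ b = w ^ s := by
      intro a b s hab
      rw [← hab, Real.rpow_add hw]
    have ep2 : w ^ (p - 1) = w ^ (p - 2) * w := (key (p - 2) (p - 1) (by ring)).symm
    have ep3 : w ^ p = w ^ (p - 2) * w * w := by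
      rw [← key (p - 1) p (by ring), ← key (p - 2) (p - 1) (by ring)]
    have ep4 : w ^ (2 * p - 2) = w ^ (p - 2) * w ^ (p - 2) * w * w := by
      rw [← key (2 * p - 3) (2 * p - 2) (by ring), ← key (2 * p - 4) (2 * p - 3) (by ring),
        ← key2 (p - 2) (p - 2) (2 * p - 4) (by ring)]
    have ep5 : w ^ (2 * p - 3) = w ^ (p - 2) * w ^ (p - 2) * w := by
      rw [← key (2 * p - 4) (2 * p - 3) (by ring), ← key2 (p - 2) (p - 2) (2 * p - 4) (by ring)]
    rw [ep2, ep3, ep4, ep5, hcA_def]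
    field_simp
    ring
  -- continuity of the antiderivative G
  have hGcont : ContinuousOn (fun x : ℝ =>
      cA * (p - 1) / (2 * p - 1) * Real.log (x / r₀ ^ 2) ^ (2 * p - 1)
        + cA * p * c / (2 * p - 2) * Real.log (x / r₀ ^ 2) ^ (2 * p - 2))
      (Set.Icc (r₀ ^ 2) (r ^ 2)) := by
    intro x hx
    have hx0 : 0 < x := lt_of_lt_of_le hr0sq hx.1
    have hq : ∀ q : ℝ, 0 < q → ContinuousAt (fun y : ℝ => Real.log (y / r₀ ^ 2) ^ q) x := by
      intro q hqpos
      have hrc : ContinuousAt (fun y : ℝ => y ^ q) (Real.log (x / r₀ ^ 2)) :=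
        Real.continuousAt_rpow_const _ _ (Or.inr hqpos.le)
      exact ContinuousAt.comp (x := x) hrc (hLcont _ hx0)
    exact ((continuousAt_const.mul (hq _ h2p1)).add
      (continuousAt_const.mul (hq _ h2p2))).continuousWithinAt
  -- derivative of G
  have hG' : ∀ x : ℝ, r₀ ^ 2 < x →
      HasDerivAt (fun x : ℝ =>
        cA * (p - 1) / (2 * p - 1) * Real.log (x / r₀ ^ 2) ^ (2 * p - 1)
          + cA * p * c / (2 * p - 2) * Real.log (x / r₀ ^ 2) ^ (2 * p - 2))
        (cA * (p - 1) * (Real.log (x / r₀ ^ 2) ^ (2 * p - 2) * x⁻¹)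
          + cA * p * c * (Real.log (x / r₀ ^ 2) ^ (2 * p - 3) * x⁻¹)) x := by
    intro x hx
    have hx0 : 0 < x := hr0sq.trans hx
    have hLne : Real.log (x / r₀ ^ 2) ≠ 0 := (hLpos x hx).ne'
    have h1 := ((hL' x hx0).rpow_const (p := 2 * p - 1) (Or.inl hLne)).const_mul
      (cA * (p - 1) / (2 * p - 1))
    have h2 := ((hL' x hx0).rpow_const (p := 2 * p - 2) (Or.inl hLne)).const_mul
      (cA * p * c / (2 * p - 2))
    have h3 := h1.add h2
    refine h3.congr_deriv ?_
    rw [show 2 * p - 1 - 1 = 2 * p - 2 by ring, show 2 * p - 2 - 1 = 2 * p - 3 by ring]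
    linear_combination (cA * (p - 1) * x⁻¹ * Real.log (x / r₀ ^ 2) ^ (2 * p - 2)) * inv_mul_cancel₀ h2p1.ne'
      + (cA * p * c * x⁻¹ * Real.log (x / r₀ ^ 2) ^ (2 * p - 3)) * inv_mul_cancel₀ h2p2.ne'
  -- integrability
  have hint1 : IntervalIntegrable
      (fun x : ℝ => cA * (p - 1) * (Real.log (x / r₀ ^ 2) ^ (2 * p - 2) * x⁻¹))
      volume (r₀ ^ 2) (r ^ 2) := by
    apply ContinuousOn.intervalIntegrable
    rw [Set.uIcc_of_le hrsq.le]
    intro x hx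
    have hx0 : 0 < x := lt_of_lt_of_le hr0sq hx.1
    have hrc : ContinuousAt (fun y : ℝ => y ^ (2 * p - 2)) (Real.log (x / r₀ ^ 2)) :=
      Real.continuousAt_rpow_const _ _ (Or.inr h2p2.le)
    exact (continuousAt_const.mul ((ContinuousAt.comp (x := x) hrc (hLcont _ hx0)).mul
      (continuousAt_inv₀ hx0.ne'))).continuousWithinAt
  have hint2 : IntervalIntegrable
      (fun x : ℝ => Real.log (x / r₀ ^ 2) ^ (2 * p - 3) * x⁻¹)
      volume (r₀ ^ 2) (r ^ 2) := by
    rw [intervalIntegrable_iff_integrableOn_Ioc_of_le hrsq.le]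
    apply integrableOn_deriv_of_nonneg (g := fun x : ℝ =>
        (2 * p - 2)⁻¹ * Real.log (x / r₀ ^ 2) ^ (2 * p - 2))
    · intro x hx
      have hx0 : 0 < x := lt_of_lt_of_le hr0sq hx.1
      have hrc : ContinuousAt (fun y : ℝ => y ^ (2 * p - 2)) (Real.log (x / r₀ ^ 2)) :=
        Real.continuousAt_rpow_const _ _ (Or.inr h2p2.le)
      exact (continuousAt_const.mul
        (ContinuousAt.comp (x := x) hrc (hLcont _ hx0))).continuousWithinAt
    · intro x hx
      have hx0 : 0 < x := hr0sq.trans hx.1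
      have hLne : Real.log (x / r₀ ^ 2) ≠ 0 := (hLpos x hx.1).ne'
      have h1 := ((hL' x hx0).rpow_const (p := 2 * p - 2) (Or.inl hLne)).const_mul (2 * p - 2)⁻¹
      refine h1.congr_deriv ?_
      rw [show 2 * p - 2 - 1 = 2 * p - 3 by ring]
      field_simp
    · intro x hx
      have hx0 : 0 < x := hr0sq.trans hx.1
      exact mul_nonneg (Real.rpow_nonneg (hLpos x hx.1).le _) (inv_nonneg.2 hx0.le)
  have hφint : IntervalIntegrable (fun x : ℝ =>
      (x * deriv U x * Real.log x - U x) * (x * deriv (deriv U) x + deriv U x))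
      volume (r₀ ^ 2) (r ^ 2) := by
    have hint := hint1.add (hint2.const_mul (cA * p * c))
    rw [intervalIntegrable_iff_integrableOn_Ioc_of_le hrsq.le] at hint ⊢
    exact hint.congr_fun (fun x hx => (hφ x hx.1).symm) measurableSet_Ioc
  -- FTC
  have hFTC := intervalIntegral.integral_eq_sub_of_hasDeriv_right_of_le hrsq.le hGcont
    (fun x hx => by
      rw [hφ x hx.1]
      exact (hG' x hx.1).hasDerivWithinAt) hφint
  have hGa : cA * (p - 1) / (2 * p - 1) * Real.log (r₀ ^ 2 / r₀ ^ 2) ^ (2 * p - 1)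
      + cA * p * c / (2 * p - 2) * Real.log (r₀ ^ 2 / r₀ ^ 2) ^ (2 * p - 2) = 0 := by
    rw [hL0, Real.zero_rpow h2p1.ne', Real.zero_rpow h2p2.ne']; ring
  -- value computation
  set Λ : ℝ := Real.log (r ^ 2 / r₀ ^ 2) with hΛ_def
  have hΛ : 0 < Λ := hLpos _ hrsq
  have hpowΛ : ∀ (q : ℝ) (n : ℕ), (Λ ^ q) ^ n = Λ ^ (q * n) := by
    intro q n
    rw [← Real.rpow_natCast (Λ ^ q) n, ← Real.rpow_mul hΛ.le]
  have ht₀' : t₀ = A * p * Λ ^ (p - 1) := by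
    rw [ht₀, hdU _ hrsq]
    rw [show r ^ 2 * (A * ((r ^ 2)⁻¹ * p * Λ ^ (p - 1)))
        = (r ^ 2 * (r ^ 2)⁻¹) * (A * p * Λ ^ (p - 1)) by ring,
      mul_inv_cancel₀ (pow_ne_zero 2 (h₀.trans hr).ne'), one_mul]
  have hAk2 : A ^ (k - 2) = C₁ ^ (k - 1) := by
    rw [hA_def, hRA, ← Real.rpow_natCast ((C₁ ^ (k - 1) : ℝ) ^ (1 / ((k:ℝ) - 2))) (k - 2),
      ← Real.rpow_mul hX.le, hck2, one_div, inv_mul_cancel₀ hK2.ne', Real.rpow_one]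
  have hAk : A ^ k = C₁ ^ (k - 1) * A ^ 2 := by
    rw [← hAk2, ← pow_add]
    congr 1
    omega
  have hexpk : (p - 1) * (k:ℝ) = 2 * p - 1 := by
    rw [hp_def]; field_simp; ring
  have ht2 : t₀ ^ 2 = A ^ 2 * p ^ 2 * Λ ^ (2 * p - 2) := by
    rw [ht₀', mul_pow, mul_pow, hpowΛ (p - 1) 2,
      show (p - 1) * ((2:ℕ):ℝ) = 2 * p - 2 by push_cast; ring]
  have htk : t₀ ^ k = C₁ ^ (k - 1) * A ^ 2 * p ^ k * Λ ^ (2 * p - 1) := by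
    rw [ht₀', mul_pow, mul_pow, hpowΛ (p - 1) k, hexpk, hAk]
  have part3 : (∫ x in (r₀ ^ 2)..(r ^ 2),
      (x * deriv U x * Real.log x - U x) * (x * deriv (deriv U) x + deriv U x))
      = cst * t₀ ^ k + t₀ ^ 2 / 2 * c := by
    rw [hFTC]
    rw [hGa, sub_zero, htk, ht2]
    have S2 : cA * p * c / (2 * p - 2) = A ^ 2 * p ^ 2 / 2 * c := by
      rw [hcA_def, div_eq_iff h2p2.ne']
      ring
    have S1 : cA * (p - 1) / (2 * p - 1) = cst * (C₁ ^ (k - 1) * A ^ 2 * p ^ k) := by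
      have e1 : ((k:ℝ) - 1) ^ k = ((k:ℝ) - 1) ^ (k - 1) * ((k:ℝ) - 1) := by
        rw [← pow_succ]; congr 1; omega
      have e2 : ((k:ℝ) - 2) ^ k = ((k:ℝ) - 2) ^ (k - 2) * ((k:ℝ) - 2) ^ 2 := by
        rw [← pow_add]; congr 1; omega
      have hne1 : ((k:ℝ) - 1) ^ (k - 1) ≠ 0 := by positivity
      have hne2 : ((k:ℝ) - 2) ^ (k - 2) ≠ 0 := by positivity
      have hne3 : (C₁ : ℝ) ^ (k - 1) ≠ 0 := by positivity
      rw [div_eq_iff h2p1.ne', hcst_def, hak, hRk, hcA_def, hp_def, div_pow, e1, e2]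
      field_simp
      ring
    linear_combination Λ ^ (2 * p - 1) * S1 + Λ ^ (2 * p - 2) * S2
  -- part 4
  have part4 : deriv (deriv (fun t : ℝ => cst * t ^ k + t ^ 2 / 2 * c)) t₀ = Real.log (r ^ 2) := by
    have hd1 : deriv (fun t : ℝ => cst * t ^ k + t ^ 2 / 2 * c)
        = fun t : ℝ => cst * ((k:ℝ) * t ^ (k - 1)) + t * c := by
      funext t
      have h1 : HasDerivAt (fun t : ℝ => cst * t ^ k) (cst * ((k:ℝ) * t ^ (k - 1))) t :=
        (hasDerivAt_pow k t).const_mul cst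
      have h2 : HasDerivAt (fun t : ℝ => t ^ 2 / 2 * c) (t * c) t := by
        have h2' := ((hasDerivAt_pow 2 t).div_const 2).mul_const c
        norm_num at h2'
        convert h2' using 1
      exact (h1.add h2).deriv
    rw [hd1]
    have h4 : HasDerivAt (fun t : ℝ => cst * ((k:ℝ) * t ^ (k - 1)))
        (cst * ((k:ℝ) * (((k - 1 : ℕ):ℝ) * t₀ ^ (k - 1 - 1)))) t₀ :=
      ((hasDerivAt_pow (k - 1) t₀).const_mul (k:ℝ)).const_mul cst
    have h5 : HasDerivAt (fun t : ℝ => t * c) c t₀ := by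
      simpa using (hasDerivAt_id t₀).mul_const c
    rw [HasDerivAt.deriv (f := fun t : ℝ => cst * ((k:ℝ) * t ^ (k - 1)) + t * c) (h4.add h5)]
    rw [hck1, show k - 1 - 1 = k - 2 by omega]
    have hlogr : Real.log (r ^ 2) = Λ + c := by
      rw [hΛ_def, hc_def, Real.log_div (pow_ne_zero 2 (h₀.trans hr).ne') hr0sq.ne']
      ring
    have htk2 : t₀ ^ (k - 2) = C₁ ^ (k - 1) * p ^ (k - 2) * Λ := by
      rw [ht₀', mul_pow, mul_pow, hpowΛ (p - 1) (k - 2), hck2, hpm1', one_div,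
        inv_mul_cancel₀ hK2.ne', Real.rpow_one, hAk2]
    rw [htk2, hlogr]
    have S3 : cst * ((k:ℝ) * (((k:ℝ) - 1) * (C₁ ^ (k - 1) * p ^ (k - 2)))) = 1 := by
      have e1 : ((k:ℝ) - 1) ^ (k - 1) = ((k:ℝ) - 1) ^ (k - 2) * ((k:ℝ) - 1) := by
        rw [← pow_succ]; congr 1; omega
      have hne1 : ((k:ℝ) - 1) ^ (k - 2) ≠ 0 := by positivity
      have hne2 : ((k:ℝ) - 2) ^ (k - 2) ≠ 0 := by positivity
      have hne3 : (C₁ : ℝ) ^ (k - 1) ≠ 0 := by positivity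
      rw [hcst_def, hak, hRk, hp_def, div_pow, e1]
      field_simp
    linear_combination Λ * S3
  exact ⟨part1, part2, part3, part4⟩
end
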